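/- Let f : ℤ → F_p be defined by f(k+r) = -f(k)-f(k+1), f(0)=1, f(1)=...=f(r-1)=0, and M the n×n matrix M_{k,ℓ} = f(k-ℓ). Then M has rank exactly r, since its top-left r×r submatrix is upper triangular with nonzero diagonal. -/

import Mathlib

open Matrix

theorem circulant_rank_eq (p : ℕ) [Fact p.Prime] (r n : ℕ) (hr : 2 ≤ r) (hn : r < n)
    (f : ℤ → ZMod p)
    (hrec : ∀ k : ℤ, f (k + r) = -f k - f (k + 1))
    (h0 : f 0 = 1)
    (hinit : ∀ i : ℤ, 1 ≤ i → i ≤ (r : ℤ) - 1 → f i = 0)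
    (M : Matrix (Fin n) (Fin n) (ZMod p))
    (hM : ∀ k l : Fin n, M k l = f ((k : ℤ) - (l : ℤ))) :
    M.rank = r := by
  classical
  -- the first r columns of M
  set N : Fin r → (Fin n → ZMod p) :=
    fun ℓ => Mᵀ (Fin.castLE hn.le ℓ) with hN
  -- every column lies in the span of the first r columns
  have hspan : ∀ ℓ : Fin n, Mᵀ ℓ ∈ Submodule.span (ZMod p) (Set.range N) := by
    have H : ∀ m : ℕ, ∀ ℓ : Fin n, (ℓ : ℕ) ≤ m →
        Mᵀ ℓ ∈ Submodule.span (ZMod p) (Set.range N) := by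
      intro m
      induction m with
      | zero =>
        intro ℓ hℓ0
        have heq : Fin.castLE hn.le ⟨0, by omega⟩ = ℓ := Fin.ext (by simp; omega)
        exact Submodule.subset_span ⟨⟨0, by omega⟩, by simp [hN, heq]⟩
      | succ m ih' =>
        intro ℓ hℓm
        have ih : ∀ ℓ' : Fin n, ℓ' < ℓ → Mᵀ ℓ' ∈ Submodule.span (ZMod p) (Set.range N) := by
          intro ℓ' hlt
          exact ih' ℓ' (by have := Fin.lt_def.mp hlt; omega)
        by_cases hℓ : (ℓ : ℕ) < r
        · exact Submodule.subset_span ⟨⟨ℓ, hℓ⟩, by simp [hN, Fin.castLE]⟩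
        · push_neg at hℓ
          have hr0 : 0 < r := by omega
          have hℓ0 : 0 < (ℓ : ℕ) := by omega
          set ℓ₁ : Fin n := ⟨ℓ - r, by omega⟩ with hℓ₁
          set ℓ₂ : Fin n := ⟨ℓ - 1, by omega⟩ with hℓ₂
          have key : Mᵀ ℓ = -Mᵀ ℓ₁ - Mᵀ ℓ₂ := by
            funext k
            simp only [Matrix.transpose_apply, hM, Pi.sub_apply, Pi.neg_apply]
            have h1 : ((ℓ₁ : ℕ) : ℤ) = (ℓ : ℤ) - r := by
              simp [hℓ₁, Int.ofNat_sub hℓ]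
            have h2 : ((ℓ₂ : ℕ) : ℤ) = (ℓ : ℤ) - 1 := by
              simp [hℓ₂, Int.ofNat_sub hℓ0]
            have := hrec ((k : ℤ) - (ℓ : ℤ))
            rw [h1, h2]
            have e1 : (k : ℤ) - ((ℓ : ℤ) - r) = (k : ℤ) - ℓ + r := by ring
            have e2 : (k : ℤ) - ((ℓ : ℤ) - 1) = (k : ℤ) - ℓ + 1 := by ring
            rw [e1, e2, this]
            ring
          rw [key]
          have m1 := ih ℓ₁ (by simp [hℓ₁, Fin.lt_def]; omega)
          have m2 := ih ℓ₂ (by simp [hℓ₂, Fin.lt_def]; omega)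
          exact sub_mem (neg_mem m1) m2
    exact fun ℓ => H n ℓ (le_of_lt ℓ.isLt)
  -- the r×r top-left block
  set A : Matrix (Fin r) (Fin r) (ZMod p) :=
    fun i j => f ((i : ℤ) - (j : ℤ)) with hA
  have hAdet : A.det = 1 := by
    have htri : A.BlockTriangular id := by
      intro i j hij
      simp only [id_eq] at hij
      apply hinit
      · omega
      · have : (j : ℤ) ≥ 0 := by positivity
        have hi : (i : ℤ) ≤ (r : ℤ) - 1 := by
          have := i.isLt; omega
        omega
    rw [Matrix.det_of_upperTriangular htri]
    have : ∀ i : Fin r, A i i = 1 := by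
      intro i; simp [hA, h0]
    simp [this]
  -- the first r columns are linearly independent
  have hli : LinearIndependent (ZMod p) N := by
    rw [Fintype.linearIndependent_iff]
    intro c hc j
    have hAc : A.mulVec c = 0 := by
      funext i
      have := congrFun hc (Fin.castLE hn.le i)
      simp only [Finset.sum_apply, Pi.smul_apply, Pi.zero_apply, smul_eq_mul] at this
      simp only [Matrix.mulVec, dotProduct, Pi.zero_apply]
      rw [← this]
      apply Finset.sum_congr rfl
      intro ℓ _
      simp [hA, hN, hM, mul_comm]
    have := Matrix.eq_zero_of_mulVec_eq_zero (by rw [hAdet]; exact one_ne_zero) hAc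
    exact congrFun this j
  -- conclude
  rw [Matrix.rank_eq_finrank_span_cols]
  change Module.finrank (ZMod p) (Submodule.span (ZMod p) (Set.range Mᵀ)) = r
  have hsp : Submodule.span (ZMod p) (Set.range Mᵀ)
      = Submodule.span (ZMod p) (Set.range N) := by
    apply le_antisymm
    · rw [Submodule.span_le]
      rintro _ ⟨ℓ, rfl⟩
      exact hspan ℓ
    · apply Submodule.span_mono
      rintro _ ⟨ℓ, rfl⟩
      exact ⟨Fin.castLE hn.le ℓ, rfl⟩
  rw [hsp, finrank_span_eq_card hli, Fintype.card_fin]
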